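/- Let m, n be positive integers with g = gcd(m,n). The number of marked binary necklaces of type (m,n) — i.e., pairs of a necklace together with one of its w_N(ω) = g/r(ω) distinguishable blocks — equals (g/(m+n)) * C(m+n, n). -/

import Mathlib

/-- Rotation of a word by `k`: the letter at position `i` of the rotated word is
the letter at position `i + k (mod N)` of `w` (moves the first `k` letters to the end). -/
def rotNat (N k : ℕ) (w : Fin N → Bool) : Fin N → Bool :=
  fun i => w ⟨(i.val + k) % N, Nat.mod_lt _ i.pos⟩

/-- A binary word of type `(m,n)`: length `m+n` with exactly `m` `true`s (ups). -/
def IsWord (m n : ℕ) (w : Fin (m + n) → Bool) : Prop :=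
  (Finset.univ.filter (fun i => w i = true)).card = m

instance (m n : ℕ) : DecidablePred (IsWord m n) := fun _ => by
  unfold IsWord; infer_instance

/-- Order of the rotation stabilizer of a word. -/
def stabCard (N : ℕ) (w : Fin N → Bool) : ℕ :=
  (Finset.univ.filter (fun k : Fin N => rotNat N k.val w = w)).card

/-- The rotation orbit of a word, as a finite set. -/
def orbit (N : ℕ) (w : Fin N → Bool) : Finset (Fin N → Bool) :=
  Finset.univ.filter (fun w' => ∃ k : Fin N, rotNat N k.val w = w')

lemma rot_rot (N a b : ℕ) (w : Fin N → Bool) :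
    rotNat N a (rotNat N b w) = fun i : Fin N => w ⟨(i.val + a + b) % N, Nat.mod_lt _ i.pos⟩ := by
  funext i
  simp only [rotNat]
  congr 1
  exact Fin.ext (Nat.mod_add_mod _ _ _)

lemma rot_zero (N : ℕ) (w : Fin N → Bool) : rotNat N 0 w = w := by
  funext i
  simp only [rotNat]
  congr 1
  exact Fin.ext (by simp [Nat.mod_eq_of_lt i.isLt])

/-- Two words are rotation-equivalent if one is a rotation of the other. -/
def rotRel (N : ℕ) (w₁ w₂ : Fin N → Bool) : Prop :=
  ∃ k : Fin (N + 1), rotNat N k.val w₁ = w₂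

instance (N : ℕ) : DecidableRel (rotRel N) := fun _ _ => by
  unfold rotRel; infer_instance

lemma rot_full (N : ℕ) (w : Fin N → Bool) : rotNat N N w = w := by
  funext i
  simp only [rotNat]
  congr 1
  exact Fin.ext (by simp [Nat.add_mod_right, Nat.mod_eq_of_lt i.isLt])

lemma rotRel_refl (N : ℕ) (w : Fin N → Bool) : rotRel N w w :=
  ⟨⟨0, Nat.succ_pos N⟩, rot_zero N w⟩

lemma rotRel_symm (N : ℕ) {w₁ w₂ : Fin N → Bool} (h : rotRel N w₁ w₂) : rotRel N w₂ w₁ := by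
  obtain ⟨k, hk⟩ := h
  refine ⟨⟨N - k.val, by omega⟩, ?_⟩
  subst hk
  rw [rot_rot]
  funext i
  have : (i.val + (N - k.val) + k.val) = i.val + N := by
    have := k.isLt; omega
  rw [this]
  congr 1
  exact Fin.ext (by simp [Nat.add_mod_right, Nat.mod_eq_of_lt i.isLt])

lemma rotRel_trans (N : ℕ) {w₁ w₂ w₃ : Fin N → Bool}
    (h₁ : rotRel N w₁ w₂) (h₂ : rotRel N w₂ w₃) : rotRel N w₁ w₃ := by
  obtain ⟨k, hk⟩ := h₁
  obtain ⟨l, hl⟩ := h₂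
  subst hk; subst hl
  rcases Nat.eq_zero_or_pos N with hN | hN
  · exact ⟨⟨0, Nat.succ_pos N⟩, funext fun i => absurd i.pos (by omega)⟩
  · refine ⟨⟨(l.val + k.val) % N, by have := Nat.mod_lt (l.val + k.val) hN; omega⟩, ?_⟩
    rw [rot_rot]
    funext i
    simp only [rotNat]
    congr 1
    refine Fin.ext ?_
    show (i.val + (l.val + k.val) % N) % N = (i.val + l.val + k.val) % N
    rw [Nat.add_mod_mod]; congr 1; omega

/-- Rotation-equivalence as a setoid on words of type `(m,n)`. -/
def wordSetoid (m n : ℕ) : Setoid {w : Fin (m + n) → Bool // IsWord m n w} where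
  r w₁ w₂ := rotRel (m + n) w₁.val w₂.val
  iseqv := ⟨fun w => rotRel_refl _ w.val, rotRel_symm _, rotRel_trans _⟩

instance (m n : ℕ) : DecidableRel (wordSetoid m n).r := fun w₁ w₂ =>
  decidable_of_iff (rotRel (m + n) w₁.val w₂.val) Iff.rfl

instance (m n : ℕ) : DecidableEq (Quotient (wordSetoid m n)) := fun ω₁ ω₂ =>
  Quotient.recOnSubsingleton₂ ω₁ ω₂ fun w₁ w₂ =>
    decidable_of_iff (rotRel (m + n) w₁.val w₂.val) (Quotient.eq (r := wordSetoid m n)).symm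

/-- A binary necklace of type `(m,n)` : a rotation orbit of words of type `(m,n)`. -/
def Necklace (m n : ℕ) : Type :=
  Quotient (wordSetoid m n)

instance (m n : ℕ) : Fintype (Necklace m n) :=
  @Quotient.fintype _ _ (wordSetoid m n)
    (fun w₁ w₂ => decidable_of_iff (rotRel (m + n) w₁.val w₂.val) Iff.rfl)

section AuxRot

variable {N : ℕ}

lemma rot_mod (N k : ℕ) (w : Fin N → Bool) : rotNat N (k % N) w = rotNat N k w := by
  funext i
  simp only [rotNat]
  congr 1
  refine Fin.ext ?_
  show (i.val + k % N) % N = (i.val + k) % N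
  conv_rhs => rw [Nat.add_mod]
  rw [Nat.add_mod, Nat.mod_mod_of_dvd _ dvd_rfl]

lemma rot_add (N a b : ℕ) (w : Fin N → Bool) :
    rotNat N a (rotNat N b w) = rotNat N (b + a) w := by
  rw [rot_rot]
  funext i
  simp only [rotNat]
  congr 1
  exact Fin.ext (by show _ % N = _ % N; ring_nf)

lemma rot_cancel (N k : ℕ) (hk : k ≤ N) (w : Fin N → Bool) :
    rotNat N (N - k) (rotNat N k w) = w := by
  rw [rot_add]
  have : k + (N - k) = N := by omega
  rw [this, rot_full]

lemma rot_mul (N d : ℕ) (w : Fin N → Bool) (h : rotNat N d w = w) (q : ℕ) :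
    rotNat N (d * q) w = w := by
  induction q with
  | zero => simpa using rot_zero N w
  | succ q ih =>
    have : d * (q + 1) = d * q + d := by ring
    rw [this, ← rot_add, ih, h]

end AuxRot
section Stab

variable {N : ℕ}

/-- The minimal positive period of a word. -/
noncomputable def minPer (N : ℕ) (hN : 0 < N) (w : Fin N → Bool) : ℕ :=
  Nat.find (⟨N, hN, rot_full N w⟩ : ∃ k, 0 < k ∧ rotNat N k w = w)

lemma minPer_spec (hN : 0 < N) (w : Fin N → Bool) :
    0 < minPer N hN w ∧ rotNat N (minPer N hN w) w = w :=
  Nat.find_spec (⟨N, hN, rot_full N w⟩ : ∃ k, 0 < k ∧ rotNat N k w = w)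

lemma minPer_dvd (hN : 0 < N) (w : Fin N → Bool) {k : ℕ} (h : rotNat N k w = w) :
    minPer N hN w ∣ k := by
  set d := minPer N hN w with hd
  obtain ⟨hdpos, hdrot⟩ := minPer_spec hN w
  have hmult : rotNat N (d * (k / d)) w = w := rot_mul N d w hdrot _
  have hrem : rotNat N (k % d) w = w := by
    have h2 : d * (k / d) + k % d = k := Nat.div_add_mod k d
    have := rot_add N (k % d) (d * (k / d)) w
    rw [hmult, h2, h] at this
    exact this
  by_contra hnd
  have hpos : 0 < k % d := Nat.pos_of_ne_zero (fun h0 => hnd (Nat.dvd_of_mod_eq_zero h0))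
  have hlt : k % d < d := Nat.mod_lt _ hdpos
  exact absurd (Nat.find_min (⟨N, hN, rot_full N w⟩ : ∃ k, 0 < k ∧ rotNat N k w = w) hlt
    ⟨hpos, hrem⟩) (fun h => h)

lemma minPer_dvd_N (hN : 0 < N) (w : Fin N → Bool) : minPer N hN w ∣ N :=
  minPer_dvd hN w (rot_full N w)

lemma stabCard_eq (hN : 0 < N) (w : Fin N → Bool) :
    stabCard N w = N / minPer N hN w := by
  set d := minPer N hN w with hd
  obtain ⟨hdpos, hdrot⟩ := minPer_spec hN w
  have hdN : d ∣ N := minPer_dvd_N hN w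
  unfold stabCard
  have hset : (Finset.univ.filter (fun k : Fin N => rotNat N k.val w = w))
      = Finset.univ.filter (fun k : Fin N => d ∣ k.val) := by
    ext k
    simp only [Finset.mem_coe, Finset.mem_filter, Finset.mem_univ, true_and]
    constructor
    · intro h; exact minPer_dvd hN w h
    · rintro ⟨q, hq⟩; rw [hq]; exact rot_mul N d w hdrot q
  rw [hset]
  have : (Finset.range (N / d)).card = N / d := Finset.card_range _
  rw [← this]
  refine Finset.card_nbij' (fun k : Fin N => k.val / d)
    (fun l => ⟨l * d % N, Nat.mod_lt _ hN⟩) ?_ ?_ ?_ ?_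
  · intro k hk
    simp only [Finset.mem_coe, Finset.mem_filter, Finset.mem_univ, true_and] at hk
    simp only [Finset.mem_coe, Finset.mem_range]
    exact Nat.div_lt_div_of_lt_of_dvd hdN k.isLt
  · intro l hl
    simp only [Finset.mem_coe, Finset.mem_range] at hl
    have hlt : l * d < N := by
      rw [Nat.lt_div_iff_mul_lt' hdN] at hl; rwa [Nat.mul_comm]
    simp only [Finset.mem_coe, Finset.mem_filter, Finset.mem_univ, true_and]
    rw [Nat.mod_eq_of_lt hlt]
    exact dvd_mul_left d l
  · intro k hk
    simp only [Finset.mem_coe, Finset.mem_filter, Finset.mem_univ, true_and] at hk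
    refine Fin.ext ?_
    show k.val / d * d % N = k.val
    rw [Nat.div_mul_cancel hk, Nat.mod_eq_of_lt k.isLt]
  · intro l hl
    simp only [Finset.mem_coe, Finset.mem_range] at hl
    have hlt : l * d < N := by
      rw [Nat.lt_div_iff_mul_lt' hdN] at hl; rwa [Nat.mul_comm]
    show l * d % N / d = l
    rw [Nat.mod_eq_of_lt hlt, Nat.mul_div_cancel _ hdpos]

end Stab
section Periodic

variable {N : ℕ}

lemma period_eval (hN : 0 < N) (w : Fin N → Bool) {d : ℕ} (hdpos : 0 < d)
    (hdrot : rotNat N d w = w) (i : Fin N) :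
    w i = w ⟨i.val % d, Nat.lt_of_le_of_lt (Nat.mod_le _ _) i.isLt⟩ := by
  have hm := rot_mul N d w hdrot (i.val / d)
  conv_rhs => rw [← hm]
  simp only [rotNat]
  congr 1
  refine Fin.ext ?_
  show i.val = (i.val % d + d * (i.val / d)) % N
  have h2 := Nat.div_add_mod i.val d
  have h3 : i.val % d + d * (i.val / d) = i.val := by omega
  rw [h3, Nat.mod_eq_of_lt i.isLt]

lemma residue_card (hN : 0 < N) {d j : ℕ} (hdN : d ∣ N) (hdpos : 0 < d) (hjd : j < d) :
    (Finset.univ.filter (fun i : Fin N => i.val % d = j)).card = N / d := by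
  rw [← Finset.card_range (N / d)]
  refine Finset.card_nbij' (fun i : Fin N => i.val / d)
    (fun l => ⟨(j + l * d) % N, Nat.mod_lt _ hN⟩) ?_ ?_ ?_ ?_
  · intro i _
    simp only [Finset.mem_coe, Finset.mem_range]
    exact Nat.div_lt_div_of_lt_of_dvd hdN i.isLt
  · intro l hl
    simp only [Finset.mem_coe, Finset.mem_range] at hl
    have h1 : (l + 1) * d ≤ N := by
      rw [← Nat.le_div_iff_mul_le hdpos]; omega
    have h2 : (l + 1) * d = l * d + d := by ring
    have hlt : j + l * d < N := by omega
    simp only [Finset.mem_coe, Finset.mem_filter, Finset.mem_univ, true_and]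
    show (j + l * d) % N % d = j
    rw [Nat.mod_eq_of_lt hlt, Nat.add_mul_mod_self_right, Nat.mod_eq_of_lt hjd]
  · intro i hi
    simp only [Finset.mem_coe, Finset.mem_filter, Finset.mem_univ, true_and] at hi
    refine Fin.ext ?_
    show (j + i.val / d * d) % N = i.val
    have h2 := Nat.div_add_mod i.val d
    have h3 : i.val / d * d = d * (i.val / d) := Nat.mul_comm _ _
    have h4 : j + i.val / d * d = i.val := by omega
    rw [h4, Nat.mod_eq_of_lt i.isLt]
  · intro l hl
    simp only [Finset.mem_coe, Finset.mem_range] at hl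
    have h1 : (l + 1) * d ≤ N := by
      rw [← Nat.le_div_iff_mul_le hdpos]; omega
    have h2 : (l + 1) * d = l * d + d := by ring
    have hlt : j + l * d < N := by omega
    show (j + l * d) % N / d = l
    rw [Nat.mod_eq_of_lt hlt, Nat.add_mul_div_right _ _ hdpos, Nat.div_eq_of_lt hjd, Nat.zero_add]

lemma stabCard_dvd_trues (hN : 0 < N) (w : Fin N → Bool) :
    stabCard N w ∣ (Finset.univ.filter (fun i => w i = true)).card := by
  set d := minPer N hN w with hd
  obtain ⟨hdpos, hdrot⟩ := minPer_spec hN w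
  have hdN : d ∣ N := minPer_dvd_N hN w
  rw [stabCard_eq hN w, ← hd]
  have hmap : ∀ i ∈ Finset.univ.filter (fun i : Fin N => w i = true),
      i.val % d ∈ Finset.range d := fun i _ => Finset.mem_range.mpr (Nat.mod_lt _ hdpos)
  rw [Finset.card_eq_sum_card_fiberwise hmap]
  refine Finset.dvd_sum ?_
  intro j hj
  have hjd : j < d := Finset.mem_range.mp hj
  have hjN : j < N := lt_of_lt_of_le hjd (Nat.le_of_dvd hN hdN)
  by_cases hw : w ⟨j, hjN⟩ = true
  · have heq : (Finset.univ.filter (fun i : Fin N => w i = true)).filter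
        (fun i => i.val % d = j) = Finset.univ.filter (fun i : Fin N => i.val % d = j) := by
      ext i
      simp only [Finset.mem_coe, Finset.mem_filter, Finset.mem_univ, true_and]
      constructor
      · rintro ⟨_, h⟩; exact h
      · intro h
        refine ⟨?_, h⟩
        rw [period_eval hN w hdpos hdrot i]
        have : (⟨i.val % d, Nat.lt_of_le_of_lt (Nat.mod_le _ _) i.isLt⟩ : Fin N)
            = ⟨j, hjN⟩ := Fin.ext h
        rw [this]; exact hw
    rw [heq, residue_card hN hdN hdpos hjd]
  · have heq : (Finset.univ.filter (fun i : Fin N => w i = true)).filter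
        (fun i => i.val % d = j) = ∅ := by
      ext i
      simp only [Finset.mem_filter, Finset.mem_univ, true_and, Finset.notMem_empty,
        iff_false, not_and]
      intro hwi h
      apply hw
      rw [period_eval hN w hdpos hdrot i] at hwi
      have : (⟨i.val % d, Nat.lt_of_le_of_lt (Nat.mod_le _ _) i.isLt⟩ : Fin N)
          = ⟨j, hjN⟩ := Fin.ext h
      rw [this] at hwi; exact hwi
    rw [heq]
    simp

end Periodic
section OrbitStab

variable {N : ℕ}

lemma shift_index (hN : 0 < N) (a k : ℕ) (ha : a < N) :
    (a + k + (N - k % N)) % N = a := by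
  have h1 : k % N < N := Nat.mod_lt _ hN
  have h2 := Nat.div_add_mod k N
  set c := N * (k / N) with hc
  have h3 : a + k + (N - k % N) = a + N + c := by omega
  rw [h3, hc, Nat.add_mul_mod_self_left, Nat.add_mod_right, Nat.mod_eq_of_lt ha]

lemma rot_trues_card (hN : 0 < N) (k : ℕ) (w : Fin N → Bool) :
    (Finset.univ.filter fun i => rotNat N k w i = true).card
      = (Finset.univ.filter fun i => w i = true).card := by
  refine Finset.card_nbij' (fun i : Fin N => ⟨(i.val + k) % N, Nat.mod_lt _ hN⟩)
    (fun i : Fin N => ⟨(i.val + (N - k % N)) % N, Nat.mod_lt _ hN⟩) ?_ ?_ ?_ ?_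
  · intro i hi
    simp only [Finset.mem_coe, Finset.mem_filter, Finset.mem_univ, true_and] at hi ⊢; simp only [rotNat, Set.mem_setOf_eq] at hi ⊢
    exact hi
  · intro i hi
    simp only [Finset.mem_coe, Finset.mem_filter, Finset.mem_univ, true_and] at hi ⊢; simp only [rotNat, Set.mem_setOf_eq] at hi ⊢
    have hidx : ((i.val + (N - k % N)) % N + k) % N = i.val := by
      rw [Nat.mod_add_mod]
      have : i.val + (N - k % N) + k = i.val + k + (N - k % N) := by omega
      rw [this, shift_index hN _ _ i.isLt]
    convert hi using 2
    exact Fin.ext hidx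
  · intro i _
    refine Fin.ext ?_
    show ((i.val + k) % N + (N - k % N)) % N = i.val
    rw [Nat.mod_add_mod, shift_index hN _ _ i.isLt]
  · intro i _
    refine Fin.ext ?_
    show ((i.val + (N - k % N)) % N + k) % N = i.val
    rw [Nat.mod_add_mod]
    have : i.val + (N - k % N) + k = i.val + k + (N - k % N) := by omega
    rw [this, shift_index hN _ _ i.isLt]

lemma isWord_rot {m n : ℕ} (hN : 0 < m + n) (k : ℕ) {w : Fin (m + n) → Bool}
    (h : IsWord m n w) : IsWord m n (rotNat (m + n) k w) := by
  unfold IsWord at *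
  rw [rot_trues_card hN]
  exact h

lemma stabCard_pos (hN : 0 < N) (w : Fin N → Bool) : 0 < stabCard N w :=
  Finset.card_pos.mpr ⟨⟨0, hN⟩, by
    simp only [Finset.mem_filter, Finset.mem_univ, true_and]; exact rot_zero N w⟩

lemma orbit_mul_stab (hN : 0 < N) (w : Fin N → Bool) :
    (orbit N w).card * stabCard N w = N := by
  have horb : orbit N w = Finset.univ.image (fun k : Fin N => rotNat N k.val w) := by
    ext v
    simp [orbit, eq_comm]
  have hfib : ∀ l : Fin N,
      (Finset.univ.filter (fun k : Fin N => rotNat N k.val w = rotNat N l.val w)).card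
        = stabCard N w := by
    intro l
    unfold stabCard
    refine Finset.card_nbij' (fun k : Fin N => ⟨(k.val + (N - l.val)) % N, Nat.mod_lt _ hN⟩)
      (fun k : Fin N => ⟨(k.val + l.val) % N, Nat.mod_lt _ hN⟩) ?_ ?_ ?_ ?_
    · intro k hk
      simp only [Finset.mem_coe, Finset.mem_filter, Finset.mem_univ, true_and] at hk ⊢
      show rotNat N ((k.val + (N - l.val)) % N) w = w
      rw [rot_mod, ← rot_add, hk, rot_cancel N l.val (le_of_lt l.isLt)]
    · intro k hk
      simp only [Finset.mem_coe, Finset.mem_filter, Finset.mem_univ, true_and] at hk ⊢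
      show rotNat N ((k.val + l.val) % N) w = rotNat N l.val w
      rw [rot_mod, ← rot_add, hk]
    · intro k _
      refine Fin.ext ?_
      show ((k.val + (N - l.val)) % N + l.val) % N = k.val
      rw [Nat.mod_add_mod]
      have : k.val + (N - l.val) + l.val = k.val + N := by
        have := l.isLt; omega
      rw [this, Nat.add_mod_right, Nat.mod_eq_of_lt k.isLt]
    · intro k _
      refine Fin.ext ?_
      show ((k.val + l.val) % N + (N - l.val)) % N = k.val
      rw [Nat.mod_add_mod]
      have : k.val + l.val + (N - l.val) = k.val + N := by
        have := l.isLt; omega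
      rw [this, Nat.add_mod_right, Nat.mod_eq_of_lt k.isLt]
  have hN' : N = ∑ b ∈ Finset.univ.image (fun k : Fin N => rotNat N k.val w),
      (Finset.univ.filter (fun k : Fin N => rotNat N k.val w = b)).card := by
    have := Finset.card_eq_sum_card_image (fun k : Fin N => rotNat N k.val w)
      (Finset.univ : Finset (Fin N))
    simpa using this
  rw [horb]
  rw [Finset.sum_congr rfl (fun b hb => ?_)] at hN'
  · rw [Finset.sum_const, smul_eq_mul] at hN'
    exact hN'.symm
  · obtain ⟨l, _, rfl⟩ := Finset.mem_image.mp hb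
    exact hfib l

lemma stabCard_dvd_N (hN : 0 < N) (w : Fin N → Bool) : stabCard N w ∣ N :=
  dvd_of_mul_left_eq _ (orbit_mul_stab hN w)

lemma orbit_card_eq (hN : 0 < N) (w : Fin N → Bool) :
    (orbit N w).card = N / stabCard N w :=
  (Nat.div_eq_of_eq_mul_left (stabCard_pos hN w) (orbit_mul_stab hN w).symm).symm

lemma rotRel_iff (hN : 0 < N) (w v : Fin N → Bool) :
    rotRel N w v ↔ ∃ k : Fin N, rotNat N k.val w = v := by
  constructor
  · rintro ⟨k, rfl⟩
    exact ⟨⟨k.val % N, Nat.mod_lt _ hN⟩, rot_mod N k.val w⟩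
  · rintro ⟨k, rfl⟩
    exact ⟨⟨k.val, Nat.lt_succ_of_lt k.isLt⟩, rfl⟩

end OrbitStab
lemma card_isWord (m n : ℕ) :
    Fintype.card {w : Fin (m + n) → Bool // IsWord m n w} = Nat.choose (m + n) m := by
  have e : {w : Fin (m + n) → Bool // IsWord m n w}
      ≃ {s : Finset (Fin (m + n)) // s.card = m} :=
    { toFun := fun w => ⟨Finset.univ.filter (fun i => w.val i = true), w.prop⟩
      invFun := fun s => ⟨fun i => decide (i ∈ s.val), by
        unfold IsWord
        have hset : Finset.univ.filter (fun i => decide (i ∈ s.val) = true) = s.val := by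
          ext i
          simp
        rw [hset, s.prop]⟩
      left_inv := fun w => by
        apply Subtype.ext
        funext i
        by_cases h : w.val i = true
        · simp [h]
        · simp only [Bool.not_eq_true] at h
          simp [h]
      right_inv := fun s => by
        apply Subtype.ext
        ext i
        simp }
  rw [Fintype.card_congr e, Fintype.card_finset_len, Fintype.card_fin]
lemma fiber_card (m n : ℕ) (hN : 0 < m + n) (w : {w : Fin (m + n) → Bool // IsWord m n w}) :
    (Finset.univ.filter (fun w' : {w : Fin (m + n) → Bool // IsWord m n w} =>
        Quotient.mk (wordSetoid m n) w' = Quotient.mk (wordSetoid m n) w)).card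
      = (m + n) / stabCard (m + n) w.val := by
  rw [← orbit_card_eq hN w.val]
  refine Finset.card_nbij (fun w' => w'.val) ?_ ?_ ?_
  · intro w' hw'
    simp only [Finset.mem_coe, Finset.mem_filter, Finset.mem_univ, true_and] at hw'
    have hrel : rotRel (m + n) w'.val w.val := Quotient.exact hw'
    have hrel' : rotRel (m + n) w.val w'.val := rotRel_symm _ hrel
    obtain ⟨k, hk⟩ := (rotRel_iff hN _ _).mp hrel'
    simp only [orbit, Finset.mem_coe, Finset.coe_filter, Finset.mem_filter, Finset.mem_univ, true_and, Set.mem_setOf_eq]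
    exact ⟨k, hk⟩
  · intro a _ b _ hab
    exact Subtype.ext hab
  · intro v hv
    simp only [Finset.coe_filter, orbit, Finset.mem_filter, Finset.mem_univ, true_and,
      Set.mem_setOf_eq] at hv
    obtain ⟨k, hk⟩ := hv
    have hv' : IsWord m n v := by
      rw [← hk]
      exact isWord_rot hN k.val w.prop
    refine ⟨⟨v, hv'⟩, ?_, rfl⟩
    simp only [Finset.coe_filter, Finset.mem_univ, true_and, Set.mem_setOf_eq]
    apply Quotient.sound
    show rotRel (m + n) v w.val
    exact rotRel_symm _ ((rotRel_iff hN _ _).mpr ⟨k, hk⟩)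
/-- Theorem 3: the number of marked binary necklaces of type `(m,n)` — pairs of a
necklace `ω` together with one of its `g/r(ω)` distinguishable blocks, where
`g = gcd(m,n)` — equals `(g/(m+n)) * C(m+n, n)`. -/
theorem marked_necklace_count (m n : ℕ) (hm : 0 < m) (hn : 0 < n)
    (r : Necklace m n → ℕ)
    (hr : ∀ w : {w : Fin (m + n) → Bool // IsWord m n w},
      r (Quotient.mk (wordSetoid m n) w) = stabCard (m + n) w.val) :
    ((∑ ω : Necklace m n, Nat.gcd m n / r ω : ℕ) : ℚ)
      = (Nat.gcd m n : ℚ) / (m + n) * Nat.choose (m + n) n := by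
  have hN : 0 < m + n := by omega
  have hrfact : ∀ ω : Necklace m n, 0 < r ω ∧ r ω ∣ (m + n) ∧ r ω ∣ Nat.gcd m n := by
    intro ω
    obtain ⟨w, rfl⟩ := Quotient.exists_rep ω
    rw [hr w]
    refine ⟨stabCard_pos hN w.val, stabCard_dvd_N hN w.val, ?_⟩
    have hp : (Finset.univ.filter (fun i => w.val i = true)).card = m := w.prop
    have h1 : stabCard (m + n) w.val ∣ m := by
      have := stabCard_dvd_trues hN w.val
      rwa [hp] at this
    have h2 : stabCard (m + n) w.val ∣ n := by
      have h3 := Nat.dvd_sub (stabCard_dvd_N hN w.val) h1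
      rwa [show m + n - m = n by omega] at h3
    exact Nat.dvd_gcd h1 h2
  have hfib : ∀ ω : Quotient (wordSetoid m n),
      (Finset.univ.filter (fun w' : {w : Fin (m + n) → Bool // IsWord m n w} =>
        Quotient.mk (wordSetoid m n) w' = ω)).card = (m + n) / r ω := by
    intro ω
    obtain ⟨w, rfl⟩ := Quotient.exists_rep ω
    rw [hr w]
    exact fiber_card m n hN w
  have hsum : ∑ ω : Necklace m n, (m + n) / r ω = Nat.choose (m + n) m := by
    letI : Fintype (Quotient (wordSetoid m n)) := inferInstanceAs (Fintype (Necklace m n))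
    have h1 := Finset.card_eq_sum_card_fiberwise
        (f := fun w : {w : Fin (m + n) → Bool // IsWord m n w} =>
          Quotient.mk (wordSetoid m n) w)
        (s := Finset.univ)
        (t := (Finset.univ : Finset (Quotient (wordSetoid m n))))
        (fun _ _ => Finset.mem_univ _)
    rw [Finset.card_univ, card_isWord] at h1
    have h2 : ∑ ω ∈ (Finset.univ : Finset (Quotient (wordSetoid m n))),
        (m + n) / r ω = Nat.choose (m + n) m := by
      rw [h1]
      exact Finset.sum_congr rfl (fun ω _ => (hfib ω).symm)
    exact h2
  have hcast : ∀ ω : Necklace m n, ((Nat.gcd m n / r ω : ℕ) : ℚ)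
      = (Nat.gcd m n : ℚ) / ((m + n : ℕ) : ℚ) * (((m + n) / r ω : ℕ) : ℚ) := by
    intro ω
    obtain ⟨hpos, hdN, hdg⟩ := hrfact ω
    have h0 : ((r ω : ℚ)) ≠ 0 := Nat.cast_ne_zero.mpr (Nat.pos_iff_ne_zero.mp hpos)
    have hN0 : ((m + n : ℕ) : ℚ) ≠ 0 := Nat.cast_ne_zero.mpr (by omega)
    rw [Nat.cast_div hdg h0, Nat.cast_div hdN h0]
    field_simp
  have hchoose : Nat.choose (m + n) m = Nat.choose (m + n) n := by
    have h := Nat.choose_symm (show m ≤ m + n by omega)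
    rw [show m + n - m = n by omega] at h
    exact h.symm
  calc ((∑ ω : Necklace m n, Nat.gcd m n / r ω : ℕ) : ℚ)
      = ∑ ω : Necklace m n, ((Nat.gcd m n / r ω : ℕ) : ℚ) := by push_cast; rfl
    _ = ∑ ω : Necklace m n,
        (Nat.gcd m n : ℚ) / ((m + n : ℕ) : ℚ) * (((m + n) / r ω : ℕ) : ℚ) :=
        Finset.sum_congr rfl (fun ω _ => hcast ω)
    _ = (Nat.gcd m n : ℚ) / ((m + n : ℕ) : ℚ)
        * ((∑ ω : Necklace m n, (m + n) / r ω : ℕ) : ℚ) := by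
        rw [← Finset.mul_sum]
        push_cast
        rfl
    _ = (Nat.gcd m n : ℚ) / ((m + n : ℕ) : ℚ) * (Nat.choose (m + n) m : ℚ) := by
        rw [hsum]
    _ = (Nat.gcd m n : ℚ) / (m + n) * Nat.choose (m + n) n := by
        rw [hchoose]
        push_cast
        ring
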